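/- Suppose (x*, X*) with X* = x*x*ᵀ is an optimal solution of UC^CPP with optimal value v* = Σ_{g,t}(c^p_g p*_{gt} + c^u_g u*_{gt}). Suppose (λ, Λ, φ, Φ, δ, Ω) is feasible for the dual UC^COP (so by weak conic duality its objective Σ_t(d_tλ_t + d_t²Λ_t + Σ_{j,g}(b_{jgt}φ_{jgt} + b_{jgt}²Φ_{jgt})) is at most v*) and in addition satisfies the per-generator revenue-adequacy constraints R_g ≥ C_g for every g ∈ G, where R_g = Σ_{t∈T}(p*_{gt}λ_t + (p*_{gt})²Λ_t + Σ_{g'≠g} p*_{gt}p*_{g't}Λ_t + Σ_j(φ_{jgt}a_{jgt}ᵀx* + Φ_{jgt}Tr(a_{jgt}a_{jgt}ᵀX*))) and C_g = Σ_{t∈T}(c^p_g p*_{gt} + c^u_g u*_{gt}). Then every generator is paid exactly its cost: R_g = C_g for every g ∈ G. -/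

import Mathlib

set_option linter.unusedSectionVars false
set_option maxHeartbeats 1000000


open Matrix BigOperators Finset

/-- The completely positive cone: `M = A * Aᵀ` for some entrywise nonnegative matrix `A`. -/
def IsCP {ι : Type*} [Fintype ι] (M : Matrix ι ι ℝ) : Prop :=
  ∃ (r : ℕ) (A : Matrix ι (Fin r) ℝ), (∀ i j, 0 ≤ A i j) ∧ M = A * Aᵀ

/-- The copositive cone (quadratic-form condition on nonnegative vectors). -/
def IsCopos {ι : Type*} [Fintype ι] (M : Matrix ι ι ℝ) : Prop :=
  ∀ y : ι → ℝ, (∀ i, 0 ≤ y i) → 0 ≤ y ⬝ᵥ (M *ᵥ y)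

/-- The bordered matrix `[[1, xᵀ],[x, X]]`. -/
def border {ι : Type*} (x : ι → ℝ) (X : Matrix ι ι ℝ) :
    Matrix (Unit ⊕ ι) (Unit ⊕ ι) ℝ :=
  Matrix.fromBlocks 1 (Matrix.of fun _ j => x j) (Matrix.of fun i _ => x i) X

/-- Bordered matrix `[[0, vᵀ/2],[v/2, 0]]` so that `Tr(linMat v * border x X) = vᵀx`. -/
noncomputable def linMat {ι : Type*} (v : ι → ℝ) : Matrix (Unit ⊕ ι) (Unit ⊕ ι) ℝ :=
  Matrix.fromBlocks 0 (Matrix.of fun _ j => v j / 2) (Matrix.of fun i _ => v i / 2) 0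

/-- Bordered matrix `[[0,0],[0, v vᵀ]]` so that `Tr(quadMat v * border x X) = vᵀXv`. -/
def quadMat {ι : Type*} (v : ι → ℝ) : Matrix (Unit ⊕ ι) (Unit ⊕ ι) ℝ :=
  Matrix.fromBlocks 0 0 0 (Matrix.vecMulVec v v)

/-- Bordered matrix `B_k` with `Tr(B_k * border x X) = x_k - X_kk`. -/
noncomputable def binMat {ι : Type*} [DecidableEq ι] (k : ι) : Matrix (Unit ⊕ ι) (Unit ⊕ ι) ℝ :=
  linMat (Pi.single k 1) - Matrix.fromBlocks 0 0 0 (Matrix.single k k 1)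

/-- Index set of the UC decision vector: startup `u`, commitment `z`, production `p`,
and slacks `ψ`. -/
abbrev UCIdx (G T : Type*) (m : ℕ) : Type _ :=
  (G × T) ⊕ (G × T) ⊕ (G × T) ⊕ (Fin m × G × T)

section IPHelpers

variable {ι : Type*} [Fintype ι] [DecidableEq ι]

def ipL (B : Matrix ι ι ℝ) : Matrix ι ι ℝ →ₗ[ℝ] ℝ where
  toFun W := ∑ i, ∑ j, W i j * B i j
  map_add' W V := by simp [add_mul, Finset.sum_add_distrib]
  map_smul' c W := by simp [Finset.mul_sum, mul_assoc]

def ip (B W : Matrix ι ι ℝ) : ℝ := ipL B W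

lemma ip_eq (B W : Matrix ι ι ℝ) : ip B W = ∑ i, ∑ j, W i j * B i j := rfl

lemma ip_sub (B W V : Matrix ι ι ℝ) : ip B (W - V) = ip B W - ip B V :=
  map_sub (ipL B) W V

lemma ip_smul (B W : Matrix ι ι ℝ) (c : ℝ) : ip B (c • W) = c * ip B W :=
  map_smul (ipL B) c W

lemma ip_sum {κ : Type*} (B : Matrix ι ι ℝ) (s : Finset κ) (f : κ → Matrix ι ι ℝ) :
    ip B (∑ k ∈ s, f k) = ∑ k ∈ s, ip B (f k) :=
  map_sum (ipL B) f s

lemma ip_zero (B : Matrix ι ι ℝ) : ip B 0 = 0 := map_zero (ipL B)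

lemma ip_linMat (x : ι → ℝ) (X : Matrix ι ι ℝ) (v : ι → ℝ) :
    ip (border x X) (linMat v) = v ⬝ᵥ x := by
  simp [ip_eq, border, linMat, Fintype.sum_sum_type, dotProduct]
  rw [← Finset.sum_add_distrib]
  exact Finset.sum_congr rfl fun i _ => by ring

lemma ip_quadMat (x : ι → ℝ) (X : Matrix ι ι ℝ) (v : ι → ℝ) :
    ip (border x X) (quadMat v) = v ⬝ᵥ (X *ᵥ v) := by
  simp [ip_eq, border, quadMat, Fintype.sum_sum_type, dotProduct, Matrix.mulVec,
    Matrix.vecMulVec_apply, Finset.mul_sum]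
  exact Finset.sum_congr rfl fun i _ => Finset.sum_congr rfl fun j _ => by ring

lemma ip_binMat (x : ι → ℝ) (X : Matrix ι ι ℝ) (k : ι) :
    ip (border x X) (binMat k) = x k - X k k := by
  rw [binMat, ip_sub, ip_linMat]
  congr 1
  · simp [dotProduct, Pi.single_apply]
  · simp [ip_eq, border, Fintype.sum_sum_type, Matrix.single, ite_and]



lemma ip_nonneg (B Ω : Matrix ι ι ℝ) (hB : IsCP B) (hΩ : IsCopos Ω) : 0 ≤ ip B Ω := by
  obtain ⟨r, A, hA, rfl⟩ := hB
  have key : ip (A * Aᵀ) Ω = ∑ k : Fin r, (fun i => A i k) ⬝ᵥ (Ω *ᵥ fun i => A i k) := by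
    have e1 : ip (A * Aᵀ) Ω
        = ∑ i, ∑ j, ∑ k : Fin r, Ω i j * (A i k * A j k) := by
      simp only [ip_eq, Matrix.mul_apply, Matrix.transpose_apply, Finset.mul_sum]
    have e2 : ∀ i : ι, ∑ j, ∑ k : Fin r, Ω i j * (A i k * A j k)
        = ∑ k : Fin r, ∑ j, Ω i j * (A i k * A j k) := fun i =>
      Finset.sum_comm (s := Finset.univ) (t := Finset.univ)
        (f := fun j k => Ω i j * (A i k * A j k))
    have e3 : ∑ i, ∑ k : Fin r, ∑ j, Ω i j * (A i k * A j k)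
        = ∑ k : Fin r, ∑ i, ∑ j, Ω i j * (A i k * A j k) :=
      Finset.sum_comm (s := Finset.univ) (t := Finset.univ)
        (f := fun i k => ∑ j, Ω i j * (A i k * A j k))
    rw [e1]
    rw [Finset.sum_congr rfl fun i _ => e2 i, e3]
    refine Finset.sum_congr rfl fun k _ => ?_
    simp only [dotProduct, Matrix.mulVec, Finset.mul_sum]
    refine Finset.sum_congr rfl fun i _ => Finset.sum_congr rfl fun j _ => by ring
  rw [key]
  exact Finset.sum_nonneg fun k _ => hΩ _ (fun i => hA i k)

lemma dot_vecMulVec (x v : ι → ℝ) : v ⬝ᵥ ((Matrix.vecMulVec x x) *ᵥ v) = (v ⬝ᵥ x) ^ 2 := by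
  rw [pow_two]
  simp only [dotProduct, Matrix.mulVec, Matrix.vecMulVec_apply]
  rw [Finset.sum_mul_sum]
  simp only [Finset.mul_sum]
  refine Finset.sum_congr rfl fun i _ => Finset.sum_congr rfl fun j _ => by ring


end IPHelpers

variable {G T : Type*} {m : ℕ}

def idxU (g : G) (t : T) : UCIdx G T m := Sum.inl (g, t)
def idxZ (g : G) (t : T) : UCIdx G T m := Sum.inr (Sum.inl (g, t))
def idxP (g : G) (t : T) : UCIdx G T m := Sum.inr (Sum.inr (Sum.inl (g, t)))

section

variable [Fintype G] [DecidableEq G] [Fintype T] [DecidableEq T]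

/-- Coefficient vector of the power balance at time `t` (indicator of `p_{g,t}`). -/
def hvec (t : T) : UCIdx G T m → ℝ := fun i =>
  match i with
  | Sum.inr (Sum.inr (Sum.inl (_, t'))) => if t' = t then 1 else 0
  | _ => 0

/-- Cost vector of UC: `c^u_g` on `u`-indices and `c^p_g` on `p`-indices. -/
def cvec (cp cu : G → ℝ) : UCIdx G T m → ℝ := fun i =>
  match i with
  | Sum.inl (g, _) => cu g
  | Sum.inr (Sum.inr (Sum.inl (g, _))) => cp g
  | _ => 0

/-- Feasibility for the completely positive reformulation `UC^CPP`. -/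
def UCCPPFeas (d : T → ℝ) (a : Fin m → G → T → UCIdx G T m → ℝ)
    (b : Fin m → G → T → ℝ)
    (x : UCIdx G T m → ℝ) (X : Matrix (UCIdx G T m) (UCIdx G T m) ℝ) : Prop :=
  (∀ t, ∑ g, x (idxP g t) = d t) ∧
  (∀ j g t, a j g t ⬝ᵥ x = b j g t) ∧
  (∀ t, ∑ g, ∑ g', X (idxP g t) (idxP g' t) = (d t) ^ 2) ∧
  (∀ j g t, a j g t ⬝ᵥ (X *ᵥ a j g t) = (b j g t) ^ 2) ∧
  (∀ g t, x (idxZ g t) = X (idxZ g t) (idxZ g t)) ∧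
  IsCP (border x X)

/-- Objective of UC: total production plus startup cost. -/
def UCCost (cp cu : G → ℝ) (x : UCIdx G T m → ℝ) : ℝ :=
  ∑ g, ∑ t, (cp g * x (idxP g t) + cu g * x (idxU g t))

/-- Feasibility for the copositive dual `UC^COP`: the dual matrix equation together
with copositivity of `Ω`. -/
def UCDualFeas (cp cu : G → ℝ) (a : Fin m → G → T → UCIdx G T m → ℝ)
    (lam Lam : T → ℝ) (φ Φ : Fin m → G → T → ℝ) (δ : G → T → ℝ)
    (Ω : Matrix (Unit ⊕ UCIdx G T m) (Unit ⊕ UCIdx G T m) ℝ) : Prop :=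
  IsCopos Ω ∧
  linMat (cvec cp cu)
    - (∑ t, lam t • linMat (hvec t : UCIdx G T m → ℝ))
    - (∑ j, ∑ g, ∑ t, φ j g t • linMat (a j g t))
    - (∑ t, Lam t • quadMat (hvec t : UCIdx G T m → ℝ))
    - (∑ j, ∑ g, ∑ t, Φ j g t • quadMat (a j g t))
    - (∑ g, ∑ t, δ g t • binMat (idxZ g t))
    - Ω = 0

/-- Objective of `UC^COP`. -/
def UCDualObj (d : T → ℝ) (b : Fin m → G → T → ℝ) (lam Lam : T → ℝ)
    (φ Φ : Fin m → G → T → ℝ) : ℝ :=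
  ∑ t, (d t * lam t + (d t) ^ 2 * Lam t +
    ∑ j, ∑ g, (b j g t * φ j g t + (b j g t) ^ 2 * Φ j g t))


/-- auxiliary dot-product computations -/
lemma hvec_dot (xs : UCIdx G T m → ℝ) (t : T) :
    (hvec t : UCIdx G T m → ℝ) ⬝ᵥ xs = ∑ g, xs (idxP g t) := by
  simp [hvec, dotProduct, Fintype.sum_sum_type, Fintype.sum_prod_type, idxP,
    ite_mul, Finset.sum_ite_eq]

lemma cvec_dot (cp cu : G → ℝ) (xs : UCIdx G T m → ℝ) :
    (cvec cp cu : UCIdx G T m → ℝ) ⬝ᵥ xs = UCCost cp cu xs := by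
  simp only [cvec, UCCost, dotProduct, Fintype.sum_sum_type, Fintype.sum_prod_type,
    idxP, idxU, zero_mul, Finset.sum_const_zero, add_zero, zero_add]
  rw [← Finset.sum_add_distrib]
  refine Finset.sum_congr rfl fun g _ => ?_
  rw [← Finset.sum_add_distrib]
  exact Finset.sum_congr rfl fun t _ => by ring

lemma sum_eq_of_le {f h : G → ℝ} (hle : ∀ g, h g ≤ f g)
    (hsum : ∑ g, f g ≤ ∑ g, h g) : ∀ g, f g = h g := by
  intro g
  have key : ∀ g' ∈ (Finset.univ : Finset G), f g' - h g' = 0 := by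
    rw [← Finset.sum_eq_zero_iff_of_nonneg (fun g' _ => sub_nonneg.2 (hle g'))]
    have : ∑ g', (f g' - h g') = ∑ g', f g' - ∑ g', h g' := (Finset.sum_sub_distrib _ _)
    rw [this]
    have hnn : (0:ℝ) ≤ ∑ g', (f g' - h g') :=
      Finset.sum_nonneg fun g' _ => sub_nonneg.2 (hle g')
    rw [this] at hnn
    linarith
  have := key g (Finset.mem_univ g)
  linarith

/-- with `(x*, X*) = (x*, x*x*ᵀ)` optimal for `UC^CPP` and a dual
feasible solution of `UC^COP` satisfying the per-generator revenue-adequacy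
constraints `R_g ≥ C_g`, every generator is paid exactly its cost: `R_g = C_g`. -/
theorem rcdp_revenue_neutral_each_generator
    (cp cu : G → ℝ) (d : T → ℝ)
    (a : Fin m → G → T → UCIdx G T m → ℝ) (b : Fin m → G → T → ℝ)
    (xs : UCIdx G T m → ℝ) (Xs : Matrix (UCIdx G T m) (UCIdx G T m) ℝ)
    (lam Lam : T → ℝ) (φ Φ : Fin m → G → T → ℝ) (δ : G → T → ℝ)
    (Ω : Matrix (Unit ⊕ UCIdx G T m) (Unit ⊕ UCIdx G T m) ℝ)
    (hXs : Xs = Matrix.vecMulVec xs xs)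
    (hfeas : UCCPPFeas d a b xs Xs)
    (hopt : ∀ y Y, UCCPPFeas d a b y Y → UCCost cp cu xs ≤ UCCost cp cu y)
    (hdual : UCDualFeas cp cu a lam Lam φ Φ δ Ω)
    (hadequate : ∀ g : G,
      (∑ t, (cp g * xs (idxP g t) + cu g * xs (idxU g t))) ≤
        ∑ t, (xs (idxP g t) * lam t + (xs (idxP g t)) ^ 2 * Lam t
          + (∑ g' ∈ Finset.univ.erase g, xs (idxP g t) * xs (idxP g' t) * Lam t)
          + ∑ j, (φ j g t * (a j g t ⬝ᵥ xs)
              + Φ j g t * (a j g t ⬝ᵥ (Xs *ᵥ a j g t))))) :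
    ∀ g : G,
      (∑ t, (xs (idxP g t) * lam t + (xs (idxP g t)) ^ 2 * Lam t
          + (∑ g' ∈ Finset.univ.erase g, xs (idxP g t) * xs (idxP g' t) * Lam t)
          + ∑ j, (φ j g t * (a j g t ⬝ᵥ xs)
              + Φ j g t * (a j g t ⬝ᵥ (Xs *ᵥ a j g t)))))
        = ∑ t, (cp g * xs (idxP g t) + cu g * xs (idxU g t)) := by
  obtain ⟨h1, h2, h3, h4, h5, h6⟩ := hfeas
  obtain ⟨hcop, heq⟩ := hdual
  have _instDE : DecidableEq (Unit ⊕ UCIdx G T m) := Classical.decEq _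
  -- apply the linear functional `ip B` to the dual matrix equation
  have h0 : ip (border xs Xs) (linMat (cvec cp cu)
      - (∑ t, lam t • linMat (hvec t : UCIdx G T m → ℝ))
      - (∑ j, ∑ g, ∑ t, φ j g t • linMat (a j g t))
      - (∑ t, Lam t • quadMat (hvec t : UCIdx G T m → ℝ))
      - (∑ j, ∑ g, ∑ t, Φ j g t • quadMat (a j g t))
      - (∑ g, ∑ t, δ g t • binMat (idxZ g t))
      - Ω) = 0 := by rw [heq]; exact ip_zero _
  simp only [ip_sub, ip_sum, ip_smul, ip_linMat, ip_quadMat, ip_binMat] at h0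
  -- the binary constraints contribute zero
  have hbin : ∑ g, ∑ t, δ g t * (xs (idxZ g t) - Xs (idxZ g t) (idxZ g t)) = 0 :=
    Finset.sum_eq_zero fun g _ => Finset.sum_eq_zero fun t _ => by
      rw [h5 g t]; ring
  -- the quadratic balance terms
  have hquad : ∀ t, (hvec t : UCIdx G T m → ℝ) ⬝ᵥ (Xs *ᵥ (hvec t)) = (d t) ^ 2 := by
    intro t
    rw [hXs, dot_vecMulVec, hvec_dot]
    rw [h1 t]
  have hlin : ∀ t, (hvec t : UCIdx G T m → ℝ) ⬝ᵥ xs = d t := by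
    intro t; rw [hvec_dot, h1 t]
  rw [cvec_dot] at h0
  simp only [hquad, hlin] at h0
  rw [hbin] at h0
  -- weak duality: the dual-like quantity is at most the primal cost
  have hΩ : 0 ≤ ip (border xs Xs) Ω := ip_nonneg _ Ω h6 hcop
  have hweak : (∑ t, lam t * d t) + (∑ j, ∑ g, ∑ t, φ j g t * (a j g t ⬝ᵥ xs))
      + (∑ t, Lam t * d t ^ 2)
      + (∑ j, ∑ g, ∑ t, Φ j g t * (a j g t ⬝ᵥ (Xs *ᵥ a j g t)))
      ≤ UCCost cp cu xs := by linarith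
  -- sum of revenues equals the dual-like quantity
  set R : G → ℝ := fun g => ∑ t, (xs (idxP g t) * lam t + (xs (idxP g t)) ^ 2 * Lam t
      + (∑ g' ∈ Finset.univ.erase g, xs (idxP g t) * xs (idxP g' t) * Lam t)
      + ∑ j, (φ j g t * (a j g t ⬝ᵥ xs)
          + Φ j g t * (a j g t ⬝ᵥ (Xs *ᵥ a j g t)))) with hR
  set C : G → ℝ := fun g => ∑ t, (cp g * xs (idxP g t) + cu g * xs (idxU g t)) with hC
  have hRsum : ∑ g, R g = (∑ t, lam t * d t)
      + (∑ j, ∑ g, ∑ t, φ j g t * (a j g t ⬝ᵥ xs))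
      + (∑ t, Lam t * d t ^ 2)
      + (∑ j, ∑ g, ∑ t, Φ j g t * (a j g t ⬝ᵥ (Xs *ᵥ a j g t))) := by
    have swap : ∑ g, R g = ∑ t, ∑ g, (xs (idxP g t) * lam t + (xs (idxP g t)) ^ 2 * Lam t
        + (∑ g' ∈ Finset.univ.erase g, xs (idxP g t) * xs (idxP g' t) * Lam t)
        + ∑ j, (φ j g t * (a j g t ⬝ᵥ xs)
            + Φ j g t * (a j g t ⬝ᵥ (Xs *ᵥ a j g t)))) := Finset.sum_comm
    rw [swap]
    have hper : ∀ t, ∑ g, (xs (idxP g t) * lam t + (xs (idxP g t)) ^ 2 * Lam t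
        + (∑ g' ∈ Finset.univ.erase g, xs (idxP g t) * xs (idxP g' t) * Lam t)
        + ∑ j, (φ j g t * (a j g t ⬝ᵥ xs)
            + Φ j g t * (a j g t ⬝ᵥ (Xs *ᵥ a j g t))))
        = lam t * d t + Lam t * d t ^ 2
          + ∑ g, ∑ j, (φ j g t * (a j g t ⬝ᵥ xs)
            + Φ j g t * (a j g t ⬝ᵥ (Xs *ᵥ a j g t))) := by
      intro t
      have e1 : ∑ g, xs (idxP g t) * lam t = lam t * d t := by
        rw [← Finset.sum_mul, h1 t]; ring
      have e2 : ∑ g, ((xs (idxP g t)) ^ 2 * Lam t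
          + ∑ g' ∈ Finset.univ.erase g, xs (idxP g t) * xs (idxP g' t) * Lam t)
          = Lam t * d t ^ 2 := by
        have inner : ∀ g, (xs (idxP g t)) ^ 2 * Lam t
            + ∑ g' ∈ Finset.univ.erase g, xs (idxP g t) * xs (idxP g' t) * Lam t
            = ∑ g', xs (idxP g t) * xs (idxP g' t) * Lam t := by
          intro g
          rw [← Finset.add_sum_erase _ _ (Finset.mem_univ g)]
          congr 1
          ring
        simp only [inner]
        have : ∑ g, ∑ g', xs (idxP g t) * xs (idxP g' t) * Lam t
            = (∑ g, ∑ g', xs (idxP g t) * xs (idxP g' t)) * Lam t := by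
          rw [Finset.sum_mul]
          exact Finset.sum_congr rfl fun g _ => (Finset.sum_mul _ _ _).symm
        rw [this]
        have sq : ∑ g, ∑ g', xs (idxP g t) * xs (idxP g' t) = d t ^ 2 := by
          rw [pow_two, ← h1 t, Finset.sum_mul_sum]
        rw [sq]; ring
      calc ∑ g, (xs (idxP g t) * lam t + (xs (idxP g t)) ^ 2 * Lam t
            + (∑ g' ∈ Finset.univ.erase g, xs (idxP g t) * xs (idxP g' t) * Lam t)
            + ∑ j, (φ j g t * (a j g t ⬝ᵥ xs)
                + Φ j g t * (a j g t ⬝ᵥ (Xs *ᵥ a j g t))))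
          = (∑ g, xs (idxP g t) * lam t)
            + (∑ g, ((xs (idxP g t)) ^ 2 * Lam t
              + ∑ g' ∈ Finset.univ.erase g, xs (idxP g t) * xs (idxP g' t) * Lam t))
            + ∑ g, ∑ j, (φ j g t * (a j g t ⬝ᵥ xs)
                + Φ j g t * (a j g t ⬝ᵥ (Xs *ᵥ a j g t))) := by
            rw [← Finset.sum_add_distrib, ← Finset.sum_add_distrib]
            exact Finset.sum_congr rfl fun g _ => by ring
        _ = _ := by rw [e1, e2]
    simp only [hper]
    rw [Finset.sum_add_distrib, Finset.sum_add_distrib]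
    have swj : ∀ F : Fin m → G → T → ℝ,
        ∑ t, ∑ g, ∑ j, (F j g t) = ∑ j, ∑ g, ∑ t, (F j g t) := by
      intro F
      calc ∑ t, ∑ g, ∑ j, F j g t = ∑ g, ∑ t, ∑ j, F j g t := Finset.sum_comm
        _ = ∑ g, ∑ j, ∑ t, F j g t := Finset.sum_congr rfl fun g _ => Finset.sum_comm
        _ = ∑ j, ∑ g, ∑ t, F j g t := Finset.sum_comm
    have : ∑ t, ∑ g, ∑ j, (φ j g t * (a j g t ⬝ᵥ xs)
        + Φ j g t * (a j g t ⬝ᵥ (Xs *ᵥ a j g t)))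
        = (∑ j, ∑ g, ∑ t, φ j g t * (a j g t ⬝ᵥ xs))
          + ∑ j, ∑ g, ∑ t, Φ j g t * (a j g t ⬝ᵥ (Xs *ᵥ a j g t)) := by
      rw [swj (fun j g t => φ j g t * (a j g t ⬝ᵥ xs)
        + Φ j g t * (a j g t ⬝ᵥ (Xs *ᵥ a j g t)))]
      rw [← Finset.sum_add_distrib]
      refine Finset.sum_congr rfl fun j _ => ?_
      rw [← Finset.sum_add_distrib]
      refine Finset.sum_congr rfl fun g _ => ?_
      rw [← Finset.sum_add_distrib]
    rw [this]
    ring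
  have hCsum : ∑ g, C g = UCCost cp cu xs := rfl
  have hfinal : ∑ g, R g ≤ ∑ g, C g := by rw [hRsum, hCsum]; linarith
  exact sum_eq_of_le hadequate hfinal

end
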